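/- If γ is a real number with 0 < γ < π/2 and sin(π/4)·sin(5π/8 − γ) = sin(3π/8)·sin(γ − π/4), then tan γ = 2 + √2. -/
import Mathlib


open Real

/-- Coolsaet's equality for the tiling `S₁₆4` (Proposition 7.13): the solution with
`0 < γ < π/2` satisfies `tan γ = 2 + √2`. -/
theorem stmt_14 (γ : ℝ) (h1 : 0 < γ) (h2 : γ < π / 2)
    (h : Real.sin (π / 4) * Real.sin (5 * π / 8 - γ) =
      Real.sin (3 * π / 8) * Real.sin (γ - π / 4)) :
    Real.tan γ = 2 + Real.sqrt 2 := by
  have hcpos : 0 < Real.cos γ :=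
    Real.cos_pos_of_mem_Ioo ⟨by linarith [Real.pi_pos], h2⟩
  have hs2 : Real.sqrt 2 ^ 2 = 2 := Real.sq_sqrt (by norm_num)
  have hs2nn : 0 ≤ Real.sqrt 2 := Real.sqrt_nonneg 2
  have hs2lt : Real.sqrt 2 < 2 := by nlinarith
  have ha2 : Real.sqrt (2 + Real.sqrt 2) ^ 2 = 2 + Real.sqrt 2 :=
    Real.sq_sqrt (by positivity)
  have hb2 : Real.sqrt (2 - Real.sqrt 2) ^ 2 = 2 - Real.sqrt 2 :=
    Real.sq_sqrt (by linarith)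
  have hann : 0 ≤ Real.sqrt (2 + Real.sqrt 2) := Real.sqrt_nonneg _
  have hbnn : 0 ≤ Real.sqrt (2 - Real.sqrt 2) := Real.sqrt_nonneg _
  have hapos : 0 < Real.sqrt (2 + Real.sqrt 2) := by
    nlinarith
  -- key sqrt identity: √2 * √(2+√2) = (2+√2) * √(2-√2)
  have hkey2 : (Real.sqrt 2 * Real.sqrt (2 + Real.sqrt 2)) ^ 2 =
      ((2 + Real.sqrt 2) * Real.sqrt (2 - Real.sqrt 2)) ^ 2 := by
    rw [mul_pow, mul_pow, hs2, ha2, hb2]; nlinarith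
  have hkey : Real.sqrt 2 * Real.sqrt (2 + Real.sqrt 2) =
      (2 + Real.sqrt 2) * Real.sqrt (2 - Real.sqrt 2) := by
    nlinarith [mul_nonneg hs2nn hann, mul_nonneg (by linarith : (0:ℝ) ≤ 2 + Real.sqrt 2) hbnn]
  -- rewrite h
  have e1 : Real.sin (5 * π / 8 - γ) =
      Real.cos γ * Real.cos (π / 8) + Real.sin γ * Real.sin (π / 8) := by
    rw [show 5 * π / 8 - γ = π / 2 - (γ - π / 8) by ring, Real.sin_pi_div_two_sub,
      Real.cos_sub]
  have e2 : Real.sin (3 * π / 8) = Real.cos (π / 8) := by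
    rw [show 3 * π / 8 = π / 2 - π / 8 by ring, Real.sin_pi_div_two_sub]
  rw [e1, e2, Real.sin_sub, Real.sin_pi_div_four, Real.cos_pi_div_four,
    Real.cos_pi_div_eight, Real.sin_pi_div_eight] at h
  -- derive sin γ = (2 + √2) cos γ
  have hsqrtpos : 0 < Real.sqrt 2 := by nlinarith
  have step1 : Real.sqrt 2 * (2 * Real.sqrt (2 + Real.sqrt 2) * Real.cos γ -
      (Real.sqrt (2 + Real.sqrt 2) - Real.sqrt (2 - Real.sqrt 2)) * Real.sin γ) = 0 := by
    linear_combination 4 * h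
  have step1' : 2 * Real.sqrt (2 + Real.sqrt 2) * Real.cos γ =
      (Real.sqrt (2 + Real.sqrt 2) - Real.sqrt (2 - Real.sqrt 2)) * Real.sin γ := by
    have := mul_eq_zero.mp step1
    rcases this with h' | h'
    · exact absurd h' (ne_of_gt hsqrtpos)
    · linarith
  have step2 : 2 * Real.sqrt (2 + Real.sqrt 2) * Real.sin γ =
      2 * Real.sqrt (2 + Real.sqrt 2) * ((2 + Real.sqrt 2) * Real.cos γ) := by
    linear_combination (-(2 + Real.sqrt 2)) * step1' - Real.sin γ * hkey
  have key : Real.sin γ = (2 + Real.sqrt 2) * Real.cos γ :=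
    mul_left_cancel₀ (by positivity) step2
  rw [Real.tan_eq_sin_div_cos, key]
  field_simp
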